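/- arXiv:1109.0363 — 2 statements merged into one kernel-verified Lean document; each statement's English description precedes it below -/
import Mathlib

section
/- Let λ > 0 and let b_Dir be the indicator function of the irrationals. Then the two distinct continuous functions X(t) = (1 − e^{−λt})/λ and X̃(t) = 0 both satisfy the mild integral equation X(t) = ∫₀ᵗ e^{−λ(t−s)} b_Dir(X(s)) ds for all t ≥ 0. In particular the mild equation dX/dt = −λX + b_Dir(X), X(0) = 0, has at least two solutions. -/
open MeasureTheory intervalIntegral

noncomputable def bDir : ℝ → ℝ := Set.indicator {x : ℝ | Irrational x} 1

lemma bDir_zero : bDir 0 = 0 := by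
  simp [bDir, Set.indicator_apply, Irrational]

lemma bDir_irr {x : ℝ} (h : Irrational x) : bDir x = 1 := by
  simp [bDir, Set.indicator_apply, h]

lemma countable_bad (lam : ℝ) (hlam : 0 < lam) :
    Set.Countable {s : ℝ | ¬ Irrational ((1 - Real.exp (-lam * s)) / lam)} := by
  have hsub : {s : ℝ | ¬ Irrational ((1 - Real.exp (-lam * s)) / lam)} ⊆
      ⋃ q : ℚ, {s : ℝ | (1 - Real.exp (-lam * s)) / lam = (q : ℝ)} := by
    intro s hs
    simp only [Irrational, not_not, Set.mem_setOf_eq] at hs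
    obtain ⟨q, hq⟩ := hs
    exact Set.mem_iUnion.mpr ⟨q, hq.symm⟩
  refine Set.Countable.mono hsub (Set.countable_iUnion fun q => ?_)
  apply Set.Subsingleton.countable
  intro a ha b hb
  simp only [Set.mem_setOf_eq] at ha hb
  have h := ha.trans hb.symm
  field_simp at h
  have h' := neg_injective (Real.exp_injective (sub_right_injective h))
  exact mul_left_cancel₀ (ne_of_gt hlam) h'

lemma exp_integral (lam t : ℝ) (hlam : 0 < lam) :
    ∫ s in (0:ℝ)..t, Real.exp (-lam * (t - s)) = (1 - Real.exp (-lam * t)) / lam := by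
  have : ∀ s, Real.exp (-lam * (t - s)) = Real.exp (-lam * t) * Real.exp (lam * s) := by
    intro s
    rw [← Real.exp_add]; ring_nf
  simp_rw [this]
  rw [intervalIntegral.integral_const_mul]
  have h1 : ∫ s in (0:ℝ)..t, Real.exp (lam * s) = (Real.exp (lam * t) - 1) / lam := by
    rw [intervalIntegral.integral_comp_mul_left (fun x => Real.exp x) (ne_of_gt hlam)]
    simp [Real.exp_zero, div_eq_inv_mul]
  rw [h1]
  field_simp
  rw [mul_sub, ← Real.exp_add]
  simp

/-- For `λ > 0`, the two distinct continuous functions `X t = (1 - e^{-λt})/λ` and `X̃ = 0`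
both satisfy the mild integral equation `X t = ∫₀ᵗ e^{-λ(t-s)} bDir (X s) ds` for all `t ≥ 0`.
In particular the mild equation `dX/dt = -λX + bDir X`, `X 0 = 0`, has at least two
solutions. -/
theorem stmt7 (lam : ℝ) (hlam : 0 < lam) :
    (fun t : ℝ => (1 - Real.exp (-lam * t)) / lam) ≠ (fun _ : ℝ => (0 : ℝ)) ∧
    Continuous (fun t : ℝ => (1 - Real.exp (-lam * t)) / lam) ∧
    Continuous (fun _ : ℝ => (0 : ℝ)) ∧
    (∀ t : ℝ, 0 ≤ t →
      (1 - Real.exp (-lam * t)) / lam =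
        ∫ s in (0:ℝ)..t, Real.exp (-lam * (t - s)) *
          bDir ((1 - Real.exp (-lam * s)) / lam)) ∧
    (∀ t : ℝ, 0 ≤ t →
      (0 : ℝ) = ∫ s in (0:ℝ)..t, Real.exp (-lam * (t - s)) * bDir (0 : ℝ)) := by
  refine ⟨?_, ?_, continuous_const, ?_, ?_⟩
  · intro h
    have h1 := congrFun h 1
    have : Real.exp (-lam * 1) < 1 := by
      rw [Real.exp_lt_one_iff]; linarith
    have hne : (1 - Real.exp (-lam * 1)) / lam ≠ 0 := by
      apply div_ne_zero <;> nlinarith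
    exact hne h1
  · fun_prop
  · intro t ht
    have hae : ∀ᵐ s ∂(volume : Measure ℝ), s ∈ Set.uIoc (0:ℝ) t →
        Real.exp (-lam * (t - s)) * bDir ((1 - Real.exp (-lam * s)) / lam)
          = Real.exp (-lam * (t - s)) := by
      have hz := (countable_bad lam hlam).measure_zero (volume : Measure ℝ)
      filter_upwards [measure_eq_zero_iff_ae_notMem.mp hz] with s hs _
      simp only [Set.mem_setOf_eq, not_not] at hs
      rw [bDir_irr hs, mul_one]
    rw [intervalIntegral.integral_congr_ae hae, exp_integral lam t hlam]
  · intro t ht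
    simp [bDir_zero]
end

section
/- Let λ > 0 and let b_Dir be the indicator function of the irrationals. Define f : ℝ → ℝ by f(y) = −λ y + min(λ y, 1) + b_Dir(y). Then for every x ∈ ℝ with |x| < 1/λ there exist τ > 0 and infinitely many continuous functions X : [0,τ] → ℝ satisfying X(t) = x + ∫₀ᵗ f(X(s)) ds for all t ∈ [0,τ]. (Every solution stays in {|y| < 1/λ} for a short time, where f(y) = b_Dir(y), so the wild non-uniqueness of the Dirichlet-drift ODE applies.) -/
open MeasureTheory intervalIntegral

lemma bDir_of_irrational {y : ℝ} (h : Irrational y) : bDir y = 1 :=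
  Set.indicator_of_mem h _

lemma bDir_of_rat (q : ℚ) : bDir (q : ℝ) = 0 :=
  Set.indicator_of_notMem (Rat.not_irrational q) _

/-- The key computation: for any `c > 0`, the "wait at the rational level `q` for time `c`"
trajectory solves the integral equation. -/
lemma key_sol (lam x t0 c τ : ℝ) (q : ℚ) (hq : (q : ℝ) = x + t0)
    (hlam : 0 < lam) (ht0 : 0 < t0) (hc : 0 < c)
    (hbound : lam * (x + τ) ≤ 1) :
    ∀ t ∈ Set.Icc (0:ℝ) τ,
      (x + min t t0 + max (t - (t0 + c)) 0) =
        x + ∫ s in (0:ℝ)..t,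
          (-lam * (x + min s t0 + max (s - (t0 + c)) 0)
            + min (lam * (x + min s t0 + max (s - (t0 + c)) 0)) 1
            + bDir (x + min s t0 + max (s - (t0 + c)) 0)) := by
  intro t ht
  obtain ⟨ht0', htτ⟩ := ht
  set X : ℝ → ℝ := fun s => x + min s t0 + max (s - (t0 + c)) 0 with hXdef
  have hXle : ∀ s, s ≤ τ → X s ≤ x + τ := by
    intro s hs
    have h1 : min s t0 + max (s - (t0 + c)) 0 ≤ s := by
      rcases le_total (s - (t0 + c)) 0 with h | h
      · rw [max_eq_right h]; simpa using min_le_left s t0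
      · rw [max_eq_left h]
        have := min_le_right s t0
        linarith
    simp only [hXdef]
    linarith
  set ind : ℝ → ℝ := (Set.Icc t0 (t0 + c)).indicator (fun _ => (1:ℝ)) with hinddef
  -- the bad (countable) set
  set E : Set ℝ := Set.range (fun r : ℚ => (r : ℝ) - x) ∪
      Set.range (fun r : ℚ => (r : ℝ) - x + c) with hEdef
  have hEnull : volume E = 0 :=
    measure_union_null ((Set.countable_range _).measure_zero _)
      ((Set.countable_range _).measure_zero _)
  have hae : ∀ᵐ s, s ∉ E := by
    rw [← MeasureTheory.compl_mem_ae_iff] at hEnull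
    exact hEnull
  have hcong : (∫ s in (0:ℝ)..t,
      (-lam * X s + min (lam * X s) 1 + bDir (X s)))
      = ∫ s in (0:ℝ)..t, (1 - ind s) := by
    apply intervalIntegral.integral_congr_ae
    filter_upwards [hae] with s hs hsmem
    rw [Set.uIoc_of_le ht0'] at hsmem
    obtain ⟨hs0, hst⟩ := hsmem
    have h1 : lam * X s ≤ 1 :=
      le_trans (mul_le_mul_of_nonneg_left (hXle s (le_trans hst htτ)) hlam.le) hbound
    rw [min_eq_left h1]
    have hring : -lam * X s + lam * X s + bDir (X s) = bDir (X s) := by ring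
    rw [hring]
    by_cases hin : s ∈ Set.Icc t0 (t0 + c)
    · have hXs : X s = (q : ℝ) := by
        simp only [hXdef]
        rw [min_eq_right hin.1, max_eq_right (by linarith [hin.2])]
        rw [hq]; ring
      rw [hXs, bDir_of_rat, hinddef, Set.indicator_of_mem hin]
      norm_num
    · have hind0 : ind s = 0 := Set.indicator_of_notMem hin _
      rw [hind0]
      rw [Set.mem_Icc, not_and_or, not_le, not_le] at hin
      rcases hin with hlt | hgt
      · have hXs : X s = x + s := by
          simp only [hXdef]
          rw [min_eq_left hlt.le, max_eq_right (by linarith)]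
          ring
        have hirr : Irrational (x + s) := by
          intro ⟨r, hr⟩
          exact hs (Or.inl ⟨r, show (r:ℝ) - x = s by linarith⟩)
        rw [hXs, bDir_of_irrational hirr]; norm_num
      · have hXs : X s = x + s - c := by
          simp only [hXdef]
          rw [min_eq_right (by linarith), max_eq_left (by linarith)]
          ring
        have hirr : Irrational (x + s - c) := by
          intro ⟨r, hr⟩
          exact hs (Or.inr ⟨r, show (r:ℝ) - x + c = s by linarith⟩)
        rw [hXs, bDir_of_irrational hirr]; norm_num
  rw [hcong]
  have hind_int : IntervalIntegrable ind volume 0 t := by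
    apply MeasureTheory.Integrable.intervalIntegrable
    rw [hinddef, MeasureTheory.integrable_indicator_iff measurableSet_Icc]
    exact (integrableOn_const_iff (by simp)).mpr (Or.inr (by rw [Real.volume_Icc]; exact ENNReal.ofReal_lt_top))
  have hsplit : (∫ s in (0:ℝ)..t, (1 - ind s))
      = t - ∫ s in (0:ℝ)..t, ind s := by
    rw [intervalIntegral.integral_sub intervalIntegrable_const hind_int]
    simp
  rw [hsplit]
  have hindval : (∫ s in (0:ℝ)..t, ind s)
      = (volume (Set.Ioc 0 t ∩ Set.Icc t0 (t0 + c))).toReal := by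
    rw [intervalIntegral.integral_of_le ht0', hinddef,
      MeasureTheory.setIntegral_indicator measurableSet_Icc]
    simp [MeasureTheory.setIntegral_const]
    rfl
  rw [hindval]
  rcases lt_or_ge t t0 with hlt | hge
  · have hset : Set.Ioc 0 t ∩ Set.Icc t0 (t0 + c) = ∅ := by
      ext s
      simp only [Set.mem_inter_iff, Set.mem_Ioc, Set.mem_Icc, Set.mem_empty_iff_false,
        iff_false, not_and, and_imp]
      intro _ h2 h3
      linarith
    rw [hset]
    simp only [measure_empty, ENNReal.toReal_zero]
    rw [min_eq_left hlt.le, max_eq_right (by linarith)]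
    ring
  · have hset : Set.Ioc 0 t ∩ Set.Icc t0 (t0 + c) = Set.Icc t0 (min t (t0 + c)) := by
      ext s
      simp only [Set.mem_inter_iff, Set.mem_Ioc, Set.mem_Icc, le_min_iff]
      constructor
      · rintro ⟨⟨_, h2⟩, h3, h4⟩
        exact ⟨h3, h2, h4⟩
      · rintro ⟨h1, h2, h3⟩
        exact ⟨⟨lt_of_lt_of_le ht0 h1, h2⟩, h1, h3⟩
    rw [hset, Real.volume_Icc,
      ENNReal.toReal_ofReal (by have := le_min hge (by linarith : t0 ≤ t0 + c); linarith)]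
    rw [min_eq_right hge]
    rcases le_total t (t0 + c) with h | h
    · rw [min_eq_left h, max_eq_right (by linarith)]
      ring
    · rw [min_eq_right h, max_eq_left (by linarith)]
      ring

/-- Let `λ > 0` and `f y = -λ y + min (λ y) 1 + bDir y`. For every `x` with `|x| < 1/λ`
there exist `τ > 0` and infinitely many continuous functions `X : [0,τ] → ℝ` satisfying
`X t = x + ∫₀ᵗ f (X s) ds` on `[0,τ]` (solutions identified with their restrictions). -/
theorem stmt9 (lam : ℝ) (hlam : 0 < lam) (x : ℝ) (hx : |x| < 1 / lam) :
    ∃ τ : ℝ, 0 < τ ∧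
      {g : Set.Icc (0:ℝ) τ → ℝ | ∃ X : ℝ → ℝ,
        ContinuousOn X (Set.Icc (0:ℝ) τ) ∧
        (∀ t ∈ Set.Icc (0:ℝ) τ,
          X t = x + ∫ s in (0:ℝ)..t,
            (-lam * X s + min (lam * X s) 1 + bDir (X s))) ∧
        g = (Set.Icc (0:ℝ) τ).restrict X}.Infinite := by
  have hx' : x < 1 / lam := (abs_lt.mp hx).2
  obtain ⟨q, hq1, hq2⟩ := exists_rat_btwn hx'
  set t0 : ℝ := (q : ℝ) - x with ht0def
  have ht0 : 0 < t0 := by rw [ht0def]; linarith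
  set δ : ℝ := (1 / lam - (q : ℝ)) / 2 with hδdef
  have hδ : 0 < δ := by rw [hδdef]; linarith
  set τ : ℝ := t0 + δ with hτdef
  have hτpos : 0 < τ := by positivity
  refine ⟨τ, hτpos, ?_⟩
  have hbound : lam * (x + τ) ≤ 1 := by
    have h1 : x + τ ≤ 1 / lam := by
      simp only [hτdef, ht0def, hδdef]; linarith
    calc lam * (x + τ) ≤ lam * (1 / lam) := by
          exact mul_le_mul_of_nonneg_left h1 hlam.le
      _ = 1 := by field_simp
  set c : ℕ → ℝ := fun n => δ / (n + 1) with hcdef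
  have hcpos : ∀ n, 0 < c n := fun n => by positivity
  have hcle : ∀ n, c n ≤ δ := by
    intro n
    rw [hcdef]
    rw [div_le_iff₀ (by positivity)]
    nlinarith [hδ.le, (Nat.cast_nonneg n : (0:ℝ) ≤ n)]
  have hcinj : Function.Injective c := by
    intro n m h
    simp only [hcdef] at h
    have hn : ((n : ℝ) + 1) ≠ 0 := by positivity
    have hm : ((m : ℝ) + 1) ≠ 0 := by positivity
    rw [div_eq_div_iff hn hm] at h
    have : ((m : ℝ) + 1) = ((n : ℝ) + 1) := mul_left_cancel₀ (ne_of_gt hδ) h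
    have : (m : ℝ) = n := by linarith
    exact_mod_cast this.symm
  apply Set.infinite_of_injective_forall_mem
    (f := fun n : ℕ => (Set.Icc (0:ℝ) τ).restrict
      (fun s => x + min s t0 + max (s - (t0 + c n)) 0))
  case hi =>
    intro n m h
    have hτmem : τ ∈ Set.Icc (0:ℝ) τ := ⟨hτpos.le, le_refl _⟩
    have hval := congrFun h ⟨τ, hτmem⟩
    simp only [Set.restrict_apply] at hval
    change x + min τ t0 + max (τ - (t0 + c n)) 0 = x + min τ t0 + max (τ - (t0 + c m)) 0 at hval
    have hmin : min τ t0 = t0 := min_eq_right (by rw [hτdef]; linarith)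
    have hmaxn : max (τ - (t0 + c n)) 0 = δ - c n := by
      rw [max_eq_left (by rw [hτdef]; linarith [hcle n])]
      rw [hτdef]; ring
    have hmaxm : max (τ - (t0 + c m)) 0 = δ - c m := by
      rw [max_eq_left (by rw [hτdef]; linarith [hcle m])]
      rw [hτdef]; ring
    rw [hmin, hmaxn, hmaxm] at hval
    exact hcinj (by linarith)
  case hf =>
    intro n
    refine ⟨fun s => x + min s t0 + max (s - (t0 + c n)) 0, ?_, ?_, rfl⟩
    · apply Continuous.continuousOn
      fun_prop
    · intro t ht
      exact key_sol lam x t0 (c n) τ q (by rw [ht0def]; ring) hlam ht0 (hcpos n) hbound t ht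
end
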